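/- For a connected graph G with n vertices, h bridges, and s single-vertex components after bridge deletion, any spanning connected Eulerian sub-multigraph of G has at least n + 2h − s edges. -/

import Mathlib

open Classical in
/-- Degree of a vertex in a multigraph given by a multiset of edges. -/
noncomputable def mDegree {V : Type} (E : Multiset (Sym2 V)) (v : V) : ℕ :=
  Multiset.card (E.filter fun e => v ∈ e)

/-- The simple graph underlying a multiset of edges (used for connectivity). -/
def mGraph {V : Type} (E : Multiset (Sym2 V)) : SimpleGraph V :=
  SimpleGraph.fromEdgeSet {e | e ∈ E}

/-- `H` is a spanning connected Eulerian sub-multigraph of `G`. -/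
def IsSpanningEulerian {V : Type} (G : SimpleGraph V) (H : Multiset (Sym2 V)) : Prop :=
  (∀ e ∈ H, e ∈ G.edgeSet) ∧ (∀ v : V, 0 < mDegree H v) ∧
  (∀ v : V, Even (mDegree H v)) ∧ (∀ u v : V, (mGraph H).Reachable u v)

open Classical

lemma mDegree_cons {V : Type} (e : Sym2 V) (E : Multiset (Sym2 V)) (v : V) :
    mDegree (e ::ₘ E) v = mDegree E v + if v ∈ e then 1 else 0 := by
  unfold mDegree
  rw [Multiset.filter_cons]
  split <;> simp [add_comm]

lemma sum_mDegree_eq {V : Type} [Fintype V] (E : Multiset (Sym2 V))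
    (hE : ∀ e ∈ E, ¬ e.IsDiag) (X : Finset V) :
    ∑ v ∈ X, mDegree E v =
      2 * Multiset.card (E.filter fun e => ∀ a ∈ e, a ∈ X)
      + Multiset.card (E.filter fun e => (∃ a ∈ e, a ∈ X) ∧ (∃ b ∈ e, b ∉ X)) := by
  induction E using Multiset.induction_on with
  | empty => simp [mDegree]
  | cons e E ih =>
    have he : ¬ e.IsDiag := hE e (Multiset.mem_cons_self e E)
    have hE' : ∀ f ∈ E, ¬ f.IsDiag := fun f hf => hE f (Multiset.mem_cons_of_mem hf)
    induction e using Sym2.ind with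
    | _ a b =>
    have hab : a ≠ b := by simpa using he
    have hsum : ∑ v ∈ X, mDegree (s(a,b) ::ₘ E) v
        = (∑ v ∈ X, mDegree E v) + ((if a ∈ X then 1 else 0) + (if b ∈ X then 1 else 0)) := by
      rw [Finset.sum_congr rfl (fun v _ => mDegree_cons s(a,b) E v), Finset.sum_add_distrib]
      congr 1
      have hv : ∀ v ∈ X, (if v ∈ s(a,b) then (1:ℕ) else 0)
          = (if v = a then 1 else 0) + (if v = b then 1 else 0) := by
        intro v _
        by_cases h1 : v = a <;> by_cases h2 : v = b <;> simp_all [Sym2.mem_iff]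
      rw [Finset.sum_congr rfl hv, Finset.sum_add_distrib,
        Finset.sum_ite_eq' X a (fun _ => (1:ℕ)), Finset.sum_ite_eq' X b (fun _ => (1:ℕ))]
    rw [hsum, ih hE', Multiset.filter_cons, Multiset.filter_cons]
    by_cases ha : a ∈ X <;> by_cases hb : b ∈ X <;>
      simp_all [Sym2.mem_iff, hab] <;> omega

lemma walk_cross {V : Type} {E : Multiset (Sym2 V)} {X : Set V} {x y : V}
    (w : (mGraph E).Walk x y) (hy : y ∉ X) (hx : x ∈ X) :
    ∃ e ∈ E, (∃ a ∈ e, a ∈ X) ∧ (∃ b ∈ e, b ∉ X) := by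
  induction w with
  | nil => exact absurd hx hy
  | @cons u v z h' p ih =>
    by_cases hv : v ∈ X
    · exact ih hy hv
    · have hm : s(u, v) ∈ {e | e ∈ E} ∧ u ≠ v := (SimpleGraph.fromEdgeSet_adj _).1 h'
      exact ⟨s(u,v), hm.1, ⟨u, by simp, hx⟩, ⟨v, by simp, hv⟩⟩

lemma handshake {V : Type} [Fintype V] (E : Multiset (Sym2 V))
    (hE : ∀ e ∈ E, ¬ e.IsDiag) :
    ∑ v : V, mDegree E v = 2 * Multiset.card E := by
  rw [sum_mDegree_eq E hE Finset.univ]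
  have h1 : Multiset.filter (fun e => ∀ a ∈ e, a ∈ Finset.univ) E = E :=
    Multiset.filter_eq_self.2 (fun e _ a _ => Finset.mem_univ a)
  have h2 : Multiset.filter
      (fun e : Sym2 V => (∃ a ∈ e, a ∈ Finset.univ) ∧ ∃ b ∈ e, b ∉ Finset.univ) E = 0 :=
    Multiset.filter_eq_nil.2 (fun e _ h => by
      obtain ⟨_, b, _, hb⟩ := h
      exact hb (Finset.mem_univ b))
  rw [h1, h2]
  simp

lemma bridge_count {V : Type} [Fintype V] {G : SimpleGraph V} {H : Multiset (Sym2 V)}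
    (hH : IsSpanningEulerian G H) {e : Sym2 V} (he : G.IsBridge e) :
    2 ≤ Multiset.count e H ∧ Even (Multiset.count e H) := by
  obtain ⟨hsub, hpos, heven, hreach⟩ := hH
  have hnd : ∀ f ∈ H, ¬ f.IsDiag := fun f hf => G.not_isDiag_of_mem_edgeSet (hsub f hf)
  induction e using Sym2.ind with
  | _ a b =>
  rw [SimpleGraph.isBridge_iff] at he
  have hnr := he
  set Gd := G \ SimpleGraph.fromEdgeSet {s(a,b)} with hGd
  set XF : Finset V := Finset.univ.filter (fun w => Gd.Reachable a w) with hXF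
  have hmem : ∀ w, w ∈ XF ↔ Gd.Reachable a w := by
    intro w; simp [hXF]
  have ha : a ∈ XF := (hmem a).2 (SimpleGraph.Reachable.refl a)
  have hb : b ∉ XF := fun hc => hnr ((hmem b).1 hc)
  have hchar : ∀ f ∈ H, (((∃ x ∈ f, x ∈ XF) ∧ (∃ y ∈ f, y ∉ XF)) ↔ s(a,b) = f) := by
    intro f hf
    constructor
    · rintro ⟨⟨x, hxf, hxX⟩, ⟨y, hyf, hyX⟩⟩
      have hxy : x ≠ y := fun h => hyX (h ▸ hxX)
      have hfeq : f = s(x,y) := (Sym2.mem_and_mem_iff hxy).1 ⟨hxf, hyf⟩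
      have hGxy : G.Adj x y := (G.mem_edgeSet).1 (hfeq ▸ hsub f hf)
      by_contra hne
      have hne' : ¬ (SimpleGraph.fromEdgeSet {s(a,b)}).Adj x y := by
        rw [SimpleGraph.fromEdgeSet_adj]
        rintro ⟨hm, -⟩
        rw [Set.mem_singleton_iff] at hm
        exact hne (by rw [hfeq, hm])
      have hd : Gd.Adj x y := by
        rw [hGd, SimpleGraph.sdiff_adj]
        exact ⟨hGxy, hne'⟩
      exact hyX ((hmem y).2 (((hmem x).1 hxX).trans hd.reachable))
    · rintro rfl
      exact ⟨⟨a, by simp, ha⟩, ⟨b, by simp, hb⟩⟩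
  have hfe : H.filter (fun f => (∃ x ∈ f, x ∈ XF) ∧ (∃ y ∈ f, y ∉ XF)) = H.filter (s(a,b) = ·) :=
    Multiset.filter_congr (fun f hf => by rw [hchar f hf])
  have hcount : Multiset.count s(a,b) H
      = Multiset.card (H.filter (fun f => (∃ x ∈ f, x ∈ XF) ∧ (∃ y ∈ f, y ∉ XF))) := by
    rw [hfe, Multiset.count_eq_card_filter_eq]
  -- evenness
  have heq := sum_mDegree_eq H hnd XF
  have hevenS : Even (∑ v ∈ XF, mDegree H v) := Finset.even_sum _ (fun v _ => heven v)
  have heven2 : Even (Multiset.count s(a,b) H) := by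
    obtain ⟨k, hk⟩ := hevenS
    rw [heq] at hk
    rw [hcount]
    exact ⟨k - Multiset.card (H.filter fun e => ∀ a ∈ e, a ∈ XF), by omega⟩
  -- at least one
  obtain ⟨w⟩ := hreach a b
  obtain ⟨f, hfH, ⟨x, hxf, hxX⟩, ⟨y, hyf, hyX⟩⟩ :=
    walk_cross (X := (XF : Set V)) w (by simpa using hb) (by simpa using ha)
  have : s(a,b) = f := (hchar f hfH).1 ⟨⟨x, hxf, by simpa using hxX⟩, ⟨y, hyf, by simpa using hyX⟩⟩
  have h1 : 1 ≤ Multiset.count s(a,b) H := Multiset.one_le_count_iff_mem.2 (this ▸ hfH)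
  obtain ⟨k, hk⟩ := heven2
  exact ⟨by omega, ⟨k, hk⟩⟩

lemma nb_edge {V : Type} [Fintype V] {G : SimpleGraph V} {H : Multiset (Sym2 V)}
    (hH : IsSpanningEulerian G H) {v u : V} (hadj : G.Adj v u)
    (hnb : ¬ G.IsBridge s(v,u)) :
    ∃ f ∈ H, v ∈ f ∧ ¬ G.IsBridge f := by
  obtain ⟨hsub, hpos, heven, hreach⟩ := hH
  set N : Set (Sym2 V) := {e | v ∈ e ∧ ¬ G.IsBridge e} with hN
  set Gd := G.deleteEdges N with hGd
  have hvu : v ≠ u := hadj.ne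
  have key : ¬ Gd.Reachable v u := by
    intro hr
    obtain ⟨w⟩ := hr
    have hp : (w.toPath : Gd.Walk v u).IsPath := w.toPath.2
    set p : Gd.Walk v u := (w.toPath : Gd.Walk v u) with hpdef
    clear_value p
    cases p with
    | nil => exact hvu rfl
    | @cons _ c _ h' q =>
      have hGvc : G.Adj v c ∧ s(v,c) ∉ N := (SimpleGraph.deleteEdges_adj).1 h'
      have hbr : G.IsBridge s(v,c) := by
        by_contra hnb'
        exact hGvc.2 ⟨Sym2.mem_mk_left v c, hnb'⟩
      have hvq : v ∉ q.support := ((SimpleGraph.Walk.cons_isPath_iff _ _).1 hp).2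
      have hq' : ∀ e ∈ q.edges, e ∈ (G \ SimpleGraph.fromEdgeSet {s(v,c)}).edgeSet := by
        intro e he
        simp only [SimpleGraph.edgeSet_sdiff, SimpleGraph.edgeSet_fromEdgeSet,
          SimpleGraph.edgeSet_sdiff_sdiff_isDiag, Set.mem_diff, Set.mem_singleton_iff]
        refine ⟨?_, ?_⟩
        · exact (SimpleGraph.edgeSet_mono (SimpleGraph.deleteEdges_le N)) (q.edges_subset_edgeSet he)
        · rintro rfl
          exact hvq (q.fst_mem_support_of_mem_edges he)
      have q' : (G \ SimpleGraph.fromEdgeSet {s(v,c)}).Walk c u := q.transfer _ hq'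
      have adj2 : (G \ SimpleGraph.fromEdgeSet {s(v,c)}).Adj u v := by
        rw [SimpleGraph.sdiff_adj]
        refine ⟨hadj.symm, ?_⟩
        rw [SimpleGraph.fromEdgeSet_adj]
        rintro ⟨hm, -⟩
        rw [Set.mem_singleton_iff] at hm
        rw [← hm] at hbr
        rw [Sym2.eq_swap] at hbr
        exact hnb hbr
      have reach : (G \ SimpleGraph.fromEdgeSet {s(v,c)}).Reachable v c :=
        ⟨(q'.append (SimpleGraph.Walk.cons adj2 SimpleGraph.Walk.nil)).reverse⟩
      exact (SimpleGraph.isBridge_iff).1 hbr reach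
  set XF : Set V := {w | Gd.Reachable v w} with hXF
  have hvX : v ∈ XF := SimpleGraph.Reachable.refl v
  obtain ⟨w⟩ := hreach v u
  obtain ⟨f, hfH, ⟨x, hxf, hxX⟩, ⟨y, hyf, hyX⟩⟩ := walk_cross (X := XF) w key hvX
  refine ⟨f, hfH, ?_⟩
  by_contra hfN
  have hfN' : f ∉ N := fun hc => hfN hc
  have hxy : x ≠ y := fun h => hyX (h ▸ hxX)
  have hfeq : f = s(x,y) := (Sym2.mem_and_mem_iff hxy).1 ⟨hxf, hyf⟩
  have hGxy : G.Adj x y := (G.mem_edgeSet).1 (hfeq ▸ hsub f hfH)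
  have hd : Gd.Adj x y := by
    rw [hGd, SimpleGraph.deleteEdges_adj]
    exact ⟨hGxy, fun hc => hfN' (hfeq ▸ hc)⟩
  exact hyX (hxX.trans hd.reachable)

/-- For a connected graph `G` with `n` vertices, `h` bridges, and `s`
single-vertex components after deleting the bridges, every spanning connected Eulerian
sub-multigraph of `G` has at least `n + 2h - s` edges. -/
theorem stmt17 {V : Type} [Fintype V] (G : SimpleGraph V) (hconn : G.Connected)
    (n h s : ℕ) (hn : n = Fintype.card V)
    (hh : h = {e | e ∈ G.edgeSet ∧ G.IsBridge e}.ncard)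
    (G2 : SimpleGraph V) (hG2 : G2 = G.deleteEdges {e | G.IsBridge e})
    (hs : s = {v : V | ∀ w, ¬ G2.Adj v w}.ncard)
    (H : Multiset (Sym2 V)) (hH : IsSpanningEulerian G H) :
    n + 2 * h ≤ Multiset.card H + s := by
  obtain ⟨hsub, hpos, heven, hreach⟩ := hH
  have hH' : IsSpanningEulerian G H := ⟨hsub, hpos, heven, hreach⟩
  have hnd : ∀ f ∈ H, ¬ f.IsDiag := fun f hf => G.not_isDiag_of_mem_edgeSet (hsub f hf)
  set bdeg : V → ℕ := fun v => Multiset.card (H.filter fun e => v ∈ e ∧ G.IsBridge e) with hbdeg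
  set nbdeg : V → ℕ := fun v => Multiset.card (H.filter fun e => v ∈ e ∧ ¬ G.IsBridge e) with hnbdeg
  -- degree split
  have hsplit : ∀ v, mDegree H v = bdeg v + nbdeg v := by
    intro v
    have h1 := Multiset.filter_add_not (fun e => G.IsBridge e) (H.filter fun e => v ∈ e)
    have h2 : Multiset.card ((H.filter fun e => v ∈ e).filter fun e => G.IsBridge e)
        + Multiset.card ((H.filter fun e => v ∈ e).filter fun e => ¬ G.IsBridge e)
        = mDegree H v := by
      rw [← Multiset.card_add, h1]; rfl
    rw [Multiset.filter_filter, Multiset.filter_filter] at h2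
    rw [← h2, hbdeg, hnbdeg]
    simp only [and_comm]
  -- bridge sub-multiset
  set HB : Multiset (Sym2 V) := H.filter (fun e => G.IsBridge e) with hHB
  have hndB : ∀ f ∈ HB, ¬ f.IsDiag := fun f hf => hnd f (Multiset.mem_of_mem_filter hf)
  have hHBdeg : ∀ v, mDegree HB v = bdeg v := by
    intro v
    rw [hbdeg]
    show Multiset.card ((H.filter fun e => G.IsBridge e).filter fun e => v ∈ e) = _
    rw [Multiset.filter_filter]
  have hsum2 : ∑ v : V, bdeg v = 2 * Multiset.card HB := by
    rw [← handshake HB hndB]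
    exact Finset.sum_congr rfl (fun v _ => (hHBdeg v).symm)
  -- bridge finset
  set BF : Finset (Sym2 V) := Finset.univ.filter (fun e => e ∈ G.edgeSet ∧ G.IsBridge e) with hBF
  have hh' : h = BF.card := by
    rw [hh]
    have : {e | e ∈ G.edgeSet ∧ G.IsBridge e} = ↑BF := by
      ext e; simp [hBF]
    rw [this, Set.ncard_coe_finset]
  have hHBcard : 2 * BF.card ≤ Multiset.card HB := by
    have hcnt : ∀ e ∈ BF, 2 ≤ Multiset.count e HB := by
      intro e he
      have hbr : G.IsBridge e := (Finset.mem_filter.1 he).2.2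
      rw [hHB, Multiset.count_filter_of_pos hbr]
      exact (bridge_count hH' hbr).1
    have hsubBF : BF ⊆ HB.toFinset := by
      intro e he
      rw [Multiset.mem_toFinset, ← Multiset.count_pos]
      have := hcnt e he; omega
    calc 2 * BF.card = ∑ _e ∈ BF, 2 := by rw [Finset.sum_const, smul_eq_mul, mul_comm]
      _ ≤ ∑ e ∈ BF, Multiset.count e HB := Finset.sum_le_sum hcnt
      _ ≤ ∑ e ∈ HB.toFinset, Multiset.count e HB :=
          Finset.sum_le_sum_of_subset hsubBF
      _ = Multiset.card HB := Multiset.toFinset_sum_count_eq HB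
  -- isolated vertices finset
  set SF : Finset V := Finset.univ.filter (fun v => ∀ w, ¬ G2.Adj v w) with hSF
  have hs' : s = SF.card := by
    rw [hs]
    have : {v : V | ∀ w, ¬ G2.Adj v w} = ↑SF := by
      ext e; simp [hSF]
    rw [this, Set.ncard_coe_finset]
  -- even bdeg
  have hbe : ∀ v, Even (bdeg v) := by
    intro v
    show Even (Multiset.card (H.filter fun e => v ∈ e ∧ G.IsBridge e))
    have : Multiset.card (H.filter fun e => v ∈ e ∧ G.IsBridge e)
        = ∑ e ∈ (H.filter fun e => v ∈ e ∧ G.IsBridge e).toFinset,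
            Multiset.count e (H.filter fun e => v ∈ e ∧ G.IsBridge e) :=
      (Multiset.toFinset_sum_count_eq _).symm
    rw [this]
    refine Finset.even_sum _ (fun e he => ?_)
    rw [Multiset.mem_toFinset] at he
    have hp : v ∈ e ∧ G.IsBridge e := (Multiset.mem_filter.1 he).2
    rw [Multiset.count_filter_of_pos (p := fun e => v ∈ e ∧ G.IsBridge e) hp]
    exact (bridge_count hH' hp.2).2
  -- nbdeg at non-isolated vertices
  have hnb2 : ∀ v ∉ SF, 2 ≤ nbdeg v := by
    intro v hv
    obtain ⟨w, hw⟩ : ∃ w, G2.Adj v w := by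
      by_contra hc
      push_neg at hc
      exact hv (Finset.mem_filter.2 ⟨Finset.mem_univ v, hc⟩)
    rw [hG2, SimpleGraph.deleteEdges_adj] at hw
    have hnbvw : ¬ G.IsBridge s(v,w) := hw.2
    obtain ⟨f, hfH, hvf, hfnb⟩ := nb_edge hH' hw.1 hnbvw
    have h1 : 1 ≤ nbdeg v := by
      have hmem : f ∈ H.filter (fun e => v ∈ e ∧ ¬ G.IsBridge e) :=
        Multiset.mem_filter.2 ⟨hfH, hvf, hfnb⟩
      exact Multiset.card_pos_iff_exists_mem.2 ⟨f, hmem⟩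
    obtain ⟨k, hk⟩ := heven v
    obtain ⟨j, hj⟩ := hbe v
    have hsp := hsplit v
    have : Even (nbdeg v) := ⟨k - j, by omega⟩
    obtain ⟨m, hm⟩ := this
    omega
  -- total
  have hsum1 : ∑ v : V, mDegree H v = 2 * Multiset.card H := handshake H hnd
  have htot : 2 * Multiset.card H = (∑ v : V, bdeg v) + (∑ v : V, nbdeg v) := by
    rw [← hsum1, ← Finset.sum_add_distrib]
    exact Finset.sum_congr rfl (fun v _ => hsplit v)
  have hnbsum : 2 * SFᶜ.card ≤ ∑ v : V, nbdeg v := by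
    calc 2 * SFᶜ.card = ∑ _v ∈ SFᶜ, 2 := by rw [Finset.sum_const, smul_eq_mul, mul_comm]
      _ ≤ ∑ v ∈ SFᶜ, nbdeg v :=
          Finset.sum_le_sum (fun v hv => hnb2 v (Finset.mem_compl.1 hv))
      _ ≤ ∑ v : V, nbdeg v :=
          Finset.sum_le_sum_of_subset (Finset.subset_univ _)
  have hcompl : SFᶜ.card = Fintype.card V - SF.card := Finset.card_compl SF
  have hSFle : SF.card ≤ Fintype.card V := Finset.card_le_univ SF
  omega
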